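/- Let U ⊆ ℝ^m be open and, for each l,i,j ∈ {1,…,m}, let Γ^l_{ij} : U → ℝ be locally Lipschitz functions with Γ^l_{ij} = Γ^l_{ji}, and let g : U → (symmetric bilinear forms on ℝ^m) be continuous. Assume that for every p ∈ U with p^m = 0 and every v ∈ ℝ^m with v^m = 0 and g_p(v,v) < 0 one has Σ_{i,j} Γ^m_{ij}(p) v^i v^j ≥ 0. Let γ : [0,b] → U be a C² curve satisfying the geodesic equation γ̈^l(s) = −Σ_{i,j} Γ^l_{ij}(γ(s)) γ̇^i(s) γ̇^j(s), with γ^m(0) = 0, γ̇^m(0) = 0, g_{γ(0)}(γ̇(0), γ̇(0)) < 0, γ^m(s) ≥ 0 for all s ∈ [0,b], and with (γ^1(s),…,γ^{m−1}(s),0) ∈ U for all s ∈ [0,b]. Then there exists b' ∈ (0,b] such that γ^m(s) = 0 for every s ∈ [0,b']. -/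

import Mathlib

open Set

open Set intervalIntegral MeasureTheory

private lemma ftc_icc {δ : ℝ} {f f' : ℝ → ℝ}
    (hf : ∀ x ∈ Icc (0:ℝ) δ, HasDerivWithinAt f (f' x) (Icc (0:ℝ) δ) x)
    (hf'c : ContinuousOn f' (Icc (0:ℝ) δ)) {s : ℝ} (hs : s ∈ Icc (0:ℝ) δ) :
    ∫ t in (0:ℝ)..s, f' t = f s - f 0 := by
  have hsub : Icc (0:ℝ) s ⊆ Icc 0 δ := Icc_subset_Icc le_rfl hs.2
  apply intervalIntegral.integral_eq_sub_of_hasDeriv_right_of_le hs.1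
  · exact fun x hx => ((hf x (hsub hx)).continuousWithinAt).mono hsub
  · intro x hx
    exact (hf x (hsub (Ioo_subset_Icc_self hx))).mono_of_mem_nhdsWithin
      (Icc_mem_nhdsGT_of_mem ⟨hx.1.le, lt_of_lt_of_le hx.2 hs.2⟩)
  · exact (hf'c.mono hsub).intervalIntegrable_of_Icc hs.1

private lemma core_gronwall {δ C : ℝ} (hδ : 0 < δ) (hC : 0 ≤ C) {u u' u'' : ℝ → ℝ}
    (hu : ∀ s ∈ Icc (0:ℝ) δ, HasDerivWithinAt u (u' s) (Icc (0:ℝ) δ) s)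
    (hu' : ∀ s ∈ Icc (0:ℝ) δ, HasDerivWithinAt u' (u'' s) (Icc (0:ℝ) δ) s)
    (hu''c : ContinuousOn u'' (Icc (0:ℝ) δ))
    (h0 : u 0 = 0) (h0' : u' 0 = 0)
    (hpos : ∀ s ∈ Icc (0:ℝ) δ, 0 ≤ u s)
    (hineq : ∀ s ∈ Icc (0:ℝ) δ, u'' s ≤ C * (u s + |u' s|)) :
    ∀ s ∈ Icc (0:ℝ) δ, u s = 0 := by
  have hu'c : ContinuousOn u' (Icc 0 δ) := fun s hs => (hu' s hs).continuousWithinAt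
  have huc : ContinuousOn u (Icc 0 δ) := fun s hs => (hu s hs).continuousWithinAt
  set c : ℝ → ℝ := fun s => max 0 (min s δ) with hcdef
  have hcmem : ∀ s, c s ∈ Icc (0:ℝ) δ := fun s =>
    ⟨le_max_left _ _, max_le hδ.le (min_le_right _ _)⟩
  have hceq : ∀ s ∈ Icc (0:ℝ) δ, c s = s := by
    intro s hs
    simp only [hcdef, min_eq_left hs.2, max_eq_right hs.1]
  have hccont : Continuous c := continuous_const.max (continuous_id.min continuous_const)
  set q : ℝ → ℝ := fun s => max (u' (c s)) 0 with hqdef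
  have hqcont : Continuous q := (hu'c.comp_continuous hccont hcmem).max continuous_const
  have hq0 : ∀ s, 0 ≤ q s := fun s => le_max_right _ _
  have hqe : ∀ s ∈ Icc (0:ℝ) δ, q s = max (u' s) 0 := by
    intro s hs; simp only [hqdef, hceq s hs]
  set F : ℝ → ℝ := fun s => ∫ t in (0:ℝ)..s, q t with hFdef
  have hF : ∀ s, HasDerivAt F (q s) s := fun s =>
    intervalIntegral.integral_hasDerivAt_right (hqcont.intervalIntegrable _ _)
      (hqcont.stronglyMeasurable.stronglyMeasurableAtFilter) hqcont.continuousAt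
  have hF0 : F 0 = 0 := intervalIntegral.integral_same
  have hFmono : Monotone F := by
    intro a b hab
    have h1 : F a + ∫ t in a..b, q t = F b :=
      intervalIntegral.integral_add_adjacent_intervals
        (hqcont.intervalIntegrable _ _) (hqcont.intervalIntegrable _ _)
    have h2 : 0 ≤ ∫ t in a..b, q t :=
      intervalIntegral.integral_nonneg hab fun t _ => hq0 t
    linarith
  have hFnonneg : ∀ s, 0 ≤ s → 0 ≤ F s := fun s hs => hF0 ▸ hFmono hs
  have huF : ∀ s ∈ Icc (0:ℝ) δ, u s ≤ F s := by
    intro s hs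
    have hsub : Icc (0:ℝ) s ⊆ Icc 0 δ := Icc_subset_Icc le_rfl hs.2
    have h1 : ∫ t in (0:ℝ)..s, u' t ≤ ∫ t in (0:ℝ)..s, q t := by
      apply intervalIntegral.integral_mono_on hs.1
        ((hu'c.mono hsub).intervalIntegrable_of_Icc hs.1)
        (hqcont.intervalIntegrable _ _)
      intro t ht
      rw [hqe t (hsub ht)]; exact le_max_left _ _
    have h2 := ftc_icc hu hu'c hs
    rw [h2, h0, sub_zero] at h1
    exact h1
  set K : ℝ := C * (δ + 2) with hKdef
  have hK : 0 ≤ K := by positivity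
  have key : ∀ s ∈ Icc (0:ℝ) δ, u' s ≤ K * F s := by
    intro s hs
    have hsub : Icc (0:ℝ) s ⊆ Icc 0 δ := Icc_subset_Icc le_rfl hs.2
    have e1 : u' s = ∫ t in (0:ℝ)..s, u'' t := by
      rw [ftc_icc hu' hu''c hs, h0', sub_zero]
    have hintu : IntervalIntegrable u volume 0 s :=
      (huc.mono hsub).intervalIntegrable_of_Icc hs.1
    have hintu' : IntervalIntegrable u' volume 0 s :=
      (hu'c.mono hsub).intervalIntegrable_of_Icc hs.1
    have hintau' : IntervalIntegrable (fun t => |u' t|) volume 0 s := hintu'.abs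
    have e2 : ∫ t in (0:ℝ)..s, u'' t ≤ ∫ t in (0:ℝ)..s, C * (u t + |u' t|) := by
      apply intervalIntegral.integral_mono_on hs.1
        ((hu''c.mono hsub).intervalIntegrable_of_Icc hs.1)
        ((hintu.add hintau').const_mul C)
      exact fun t ht => hineq t (hsub ht)
    have e3 : ∫ t in (0:ℝ)..s, C * (u t + |u' t|)
        = C * ((∫ t in (0:ℝ)..s, u t) + ∫ t in (0:ℝ)..s, |u' t|) := by
      rw [intervalIntegral.integral_const_mul, intervalIntegral.integral_add hintu hintau']
    have e4 : ∫ t in (0:ℝ)..s, |u' t| = 2 * F s - u s := by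
      have hcong : EqOn (fun t => |u' t|) (fun t => 2 * q t - u' t) (uIcc 0 s) := by
        intro t ht
        rw [uIcc_of_le hs.1] at ht
        show |u' t| = 2 * q t - u' t
        rw [hqe t (hsub ht)]
        rcases le_total (u' t) 0 with h | h
        · simp [abs_of_nonpos h, max_eq_right h]
        · simp only [max_eq_left h, abs_of_nonneg h]; ring
      rw [intervalIntegral.integral_congr hcong, intervalIntegral.integral_sub
        ((hqcont.intervalIntegrable _ _).const_mul 2) hintu',
        intervalIntegral.integral_const_mul, ftc_icc hu hu'c hs, h0, sub_zero]
    have e5 : ∫ t in (0:ℝ)..s, u t ≤ δ * F s := by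
      have h1 : ∫ t in (0:ℝ)..s, u t ≤ ∫ t in (0:ℝ)..s, F s := by
        apply intervalIntegral.integral_mono_on hs.1 hintu
          (intervalIntegrable_const)
        intro t ht
        exact le_trans (huF t (hsub ht)) (hFmono ht.2)
      rw [intervalIntegral.integral_const, smul_eq_mul, sub_zero] at h1
      calc ∫ t in (0:ℝ)..s, u t ≤ s * F s := h1
        _ ≤ δ * F s := mul_le_mul_of_nonneg_right hs.2 (hFnonneg s hs.1)
    have hu0 : 0 ≤ u s := hpos s hs
    rw [e1]
    calc ∫ t in (0:ℝ)..s, u'' t ≤ C * ((∫ t in (0:ℝ)..s, u t) + (2 * F s - u s)) := by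
          rw [← e4, ← e3]; exact e2
      _ ≤ C * (δ * F s + 2 * F s) := by
          apply mul_le_mul_of_nonneg_left _ hC
          linarith [e5]
      _ = K * F s := by rw [hKdef]; ring
  have keyq : ∀ s ∈ Icc (0:ℝ) δ, q s ≤ K * F s := by
    intro s hs
    rw [hqe s hs]
    exact max_le (key s hs) (mul_nonneg hK (hFnonneg s hs.1))
  set H : ℝ → ℝ := fun s => F s * Real.exp (-K * s) with hHdef
  have hH : ∀ s, HasDerivAt H ((q s - K * F s) * Real.exp (-K * s)) s := by
    intro s
    have h1 : HasDerivAt (fun x : ℝ => -K * x) (-K) s := by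
      simpa using (hasDerivAt_id s).const_mul (-K)
    have h2 : HasDerivAt (fun x => F x * Real.exp (-K * x)) _ s := (hF s).mul h1.exp
    convert h2 using 1
    ring
  have hHanti : AntitoneOn H (Icc (0:ℝ) δ) := by
    apply antitoneOn_of_deriv_nonpos (convex_Icc 0 δ)
    · exact fun s _ => (hH s).continuousAt.continuousWithinAt
    · exact fun s _ => (hH s).differentiableAt.differentiableWithinAt
    · intro s hs
      rw [interior_Icc] at hs
      rw [(hH s).deriv]
      have := keyq s (Ioo_subset_Icc_self hs)
      exact mul_nonpos_of_nonpos_of_nonneg (by linarith) (Real.exp_pos _).le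
  have hFzero : ∀ s ∈ Icc (0:ℝ) δ, F s = 0 := by
    intro s hs
    have h1 : H s ≤ H 0 := hHanti ⟨le_rfl, hδ.le⟩ hs hs.1
    have h2 : H 0 = 0 := by simp [hHdef, hF0]
    have h3 : 0 < Real.exp (-K * s) := Real.exp_pos _
    rw [h2] at h1
    simp only [hHdef] at h1
    have h4 : F s ≤ 0 := by nlinarith [h1, h3]
    exact le_antisymm h4 (hFnonneg s hs.1)
  intro s hs
  exact le_antisymm (le_trans (huF s hs) (hFzero s hs).le) (hpos s hs)



/-- **Lemma 3.2 for time-infinitesimal convexity** (coordinate form): with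
locally Lipschitz symmetric Christoffel symbols `Γ` and a continuous symmetric
metric field `g` on `U`, if the infinitesimal-convexity condition
`∑ Γ^m_{ij}(p) v^i v^j ≥ 0` holds at points of the hypersurface `{x^m = 0}` for
all timelike tangent vectors `v` (i.e. `v^m = 0` and `g_p(v,v) < 0`), then a
geodesic starting on the hypersurface with timelike initial velocity tangent to
it and remaining on the side `{x^m ≥ 0}` stays in `{x^m = 0}` on some smaller
interval `[0, b']`. -/
theorem stmt_13 (m : ℕ) (hm : 0 < m) (U : Set (Fin m → ℝ)) (hU : IsOpen U)
    (Γ : Fin m → Fin m → Fin m → (Fin m → ℝ) → ℝ)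
    (hΓlip : ∀ l i j, LocallyLipschitzOn U (Γ l i j))
    (hΓsym : ∀ l i j p, Γ l i j p = Γ l j i p)
    (g : (Fin m → ℝ) → Fin m → Fin m → ℝ)
    (hgcont : ∀ i j, ContinuousOn (fun p => g p i j) U)
    (hgsym : ∀ p i j, g p i j = g p j i)
    (hconv : ∀ p ∈ U, p ⟨m - 1, by omega⟩ = 0 →
      ∀ v : Fin m → ℝ, v ⟨m - 1, by omega⟩ = 0 →
        (∑ i, ∑ j, g p i j * v i * v j) < 0 →
        0 ≤ ∑ i, ∑ j, Γ ⟨m - 1, by omega⟩ i j p * v i * v j)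
    (b : ℝ) (hb : 0 < b) (γ γ' γ'' : ℝ → Fin m → ℝ)
    (hγU : ∀ s ∈ Icc (0 : ℝ) b, γ s ∈ U)
    (hγ' : ∀ s ∈ Icc (0 : ℝ) b, HasDerivWithinAt γ (γ' s) (Icc (0 : ℝ) b) s)
    (hγ'' : ∀ s ∈ Icc (0 : ℝ) b, HasDerivWithinAt γ' (γ'' s) (Icc (0 : ℝ) b) s)
    (hγ''cont : ContinuousOn γ'' (Icc (0 : ℝ) b))
    (hgeo : ∀ s ∈ Icc (0 : ℝ) b, ∀ l,
      γ'' s l = -∑ i, ∑ j, Γ l i j (γ s) * γ' s i * γ' s j)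
    (hinit : γ 0 ⟨m - 1, by omega⟩ = 0)
    (hinit' : γ' 0 ⟨m - 1, by omega⟩ = 0)
    (hTL : (∑ i, ∑ j, g (γ 0) i j * γ' 0 i * γ' 0 j) < 0)
    (hside : ∀ s ∈ Icc (0 : ℝ) b, 0 ≤ γ s ⟨m - 1, by omega⟩)
    (hproj : ∀ s ∈ Icc (0 : ℝ) b,
      Function.update (γ s) ⟨m - 1, by omega⟩ 0 ∈ U) :
    ∃ b' : ℝ, 0 < b' ∧ b' ≤ b ∧
      ∀ s ∈ Icc (0 : ℝ) b', γ s ⟨m - 1, by omega⟩ = 0 := by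
  set e : Fin m := ⟨m - 1, by omega⟩ with he
  have h0b : (0:ℝ) ∈ Icc (0:ℝ) b := ⟨le_rfl, hb.le⟩
  have hq0U : γ 0 ∈ U := hγU 0 h0b
  have hγc : ContinuousOn γ (Icc 0 b) := fun s hs => (hγ' s hs).continuousWithinAt
  have hγ'c : ContinuousOn γ' (Icc 0 b) := fun s hs => (hγ'' s hs).continuousWithinAt
  -- velocity bound
  obtain ⟨V0, hV0⟩ := isCompact_Icc.exists_bound_of_continuousOn hγ'c
  set V : ℝ := max V0 0 with hVdef
  have hV : 0 ≤ V := le_max_right _ _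
  have hVb : ∀ s ∈ Icc (0:ℝ) b, ∀ i, |γ' s i| ≤ V := by
    intro s hs i
    calc |γ' s i| = ‖γ' s i‖ := rfl
      _ ≤ ‖γ' s‖ := norm_le_pi_norm _ i
      _ ≤ V0 := hV0 s hs
      _ ≤ V := le_max_left _ _
  -- Lipschitz data near γ 0
  choose K t ht hlip using fun ij : Fin m × Fin m => hΓlip e ij.1 ij.2 hq0U
  have hT : (⋂ ij, t ij) ∈ nhdsWithin (γ 0) U := Filter.iInter_mem.2 ht
  obtain ⟨r, hr, hball⟩ := Metric.mem_nhdsWithin_iff.1 hT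
  obtain ⟨C0, hC0⟩ := Finite.exists_le fun ij : Fin m × Fin m => (K ij : ℝ)
  set C : ℝ := max C0 0 with hCdef
  have hC : 0 ≤ C := le_max_right _ _
  have hmemT : ∀ x, x ∈ Metric.ball (γ 0) r ∩ U → ∀ ij : Fin m × Fin m, x ∈ t ij := by
    intro x hx ij
    exact Set.mem_iInter.1 (hball hx) ij
  have hlipE : ∀ i j, ∀ x ∈ Metric.ball (γ 0) r ∩ U, ∀ y ∈ Metric.ball (γ 0) r ∩ U,
      |Γ e i j x - Γ e i j y| ≤ C * dist x y := by
    intro i j x hx y hy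
    calc |Γ e i j x - Γ e i j y| = dist (Γ e i j x) (Γ e i j y) := (Real.dist_eq _ _).symm
      _ ≤ (K (i,j) : ℝ) * dist x y :=
          (hlip (i,j)).dist_le_mul x (hmemT x hx (i,j)) y (hmemT y hy (i,j))
      _ ≤ C * dist x y :=
          mul_le_mul_of_nonneg_right (le_trans (hC0 (i,j)) (le_max_left _ _)) dist_nonneg
  obtain ⟨B0, hB0⟩ := Finite.exists_le fun ij : Fin m × Fin m => |Γ e ij.1 ij.2 (γ 0)|
  set B : ℝ := max B0 0 + C * r with hBdef
  have hB : 0 ≤ B := add_nonneg (le_max_right _ _) (mul_nonneg hC hr.le)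
  have hq0ball : γ 0 ∈ Metric.ball (γ 0) r ∩ U := ⟨Metric.mem_ball_self hr, hq0U⟩
  have hΓbound : ∀ i j, ∀ x ∈ Metric.ball (γ 0) r ∩ U, |Γ e i j x| ≤ B := by
    intro i j x hx
    have h1 := hlipE i j x hx (γ 0) hq0ball
    have h2 : dist x (γ 0) ≤ r := (Metric.mem_ball.1 hx.1).le
    have h3 : |Γ e i j (γ 0)| ≤ max B0 0 := le_trans (hB0 (i,j)) (le_max_left _ _)
    have h4 : |Γ e i j x| ≤ |Γ e i j x - Γ e i j (γ 0)| + |Γ e i j (γ 0)| := by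
      calc |Γ e i j x| = |(Γ e i j x - Γ e i j (γ 0)) + Γ e i j (γ 0)| := by ring_nf
        _ ≤ _ := abs_add_le _ _
    have h5 : C * dist x (γ 0) ≤ C * r := mul_le_mul_of_nonneg_left h2 hC
    rw [hBdef]; linarith
  -- projections
  set pH : ℝ → Fin m → ℝ := fun s => Function.update (γ s) e 0 with hpHdef
  set vH : ℝ → Fin m → ℝ := fun s => Function.update (γ' s) e 0 with hvHdef
  have hpH0 : pH 0 = γ 0 := by
    funext i
    by_cases hie : i = e
    · subst hie; simp only [hpHdef, Function.update_self]; exact hinit.symm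
    · simp only [hpHdef, Function.update_of_ne hie]
  have hvH0 : vH 0 = γ' 0 := by
    funext i
    by_cases hie : i = e
    · subst hie; simp only [hvHdef, Function.update_self]; exact hinit'.symm
    · simp only [hvHdef, Function.update_of_ne hie]
  have hpHc : ContinuousOn pH (Icc 0 b) := by
    apply continuousOn_pi.2
    intro i
    by_cases hie : i = e
    · have : (fun s => pH s i) = fun _ => (0:ℝ) := by
        funext s; simp [hpHdef, hie]
      rw [this]; exact continuousOn_const
    · have : (fun s => pH s i) = fun s => γ s i := by
        funext s; simp [hpHdef, Function.update_of_ne hie]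
      rw [this]; exact (continuous_apply i).comp_continuousOn hγc
  have hvHc : ContinuousOn vH (Icc 0 b) := by
    apply continuousOn_pi.2
    intro i
    by_cases hie : i = e
    · have : (fun s => vH s i) = fun _ => (0:ℝ) := by
        funext s; simp [hvHdef, hie]
      rw [this]; exact continuousOn_const
    · have : (fun s => vH s i) = fun s => γ' s i := by
        funext s; simp [hvHdef, Function.update_of_ne hie]
      rw [this]; exact (continuous_apply i).comp_continuousOn hγ'c
  have hpHU : ∀ s ∈ Icc (0:ℝ) b, pH s ∈ U := hproj
  set G : ℝ → ℝ := fun s => ∑ i, ∑ j, g (pH s) i j * vH s i * vH s j with hGdef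
  have hGc : ContinuousOn G (Icc 0 b) := by
    apply continuousOn_finset_sum
    intro i _
    apply continuousOn_finset_sum
    intro j _
    exact (((hgcont i j).comp hpHc hpHU).mul
      ((continuous_apply i).comp_continuousOn hvHc)).mul
      ((continuous_apply j).comp_continuousOn hvHc)
  have hG0 : G 0 < 0 := by
    have : G 0 = ∑ i, ∑ j, g (γ 0) i j * γ' 0 i * γ' 0 j := by
      rw [hGdef]; simp only [hpH0, hvH0]
    rw [this]; exact hTL
  -- eventual smallness
  have hev : ∀ᶠ s in nhdsWithin 0 (Icc (0:ℝ) b),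
      γ s ∈ Metric.ball (γ 0) r ∧ pH s ∈ Metric.ball (γ 0) r ∧ G s < 0 := by
    have h1 : ∀ᶠ s in nhdsWithin 0 (Icc (0:ℝ) b), γ s ∈ Metric.ball (γ 0) r :=
      (hγc 0 h0b).eventually_mem (Metric.ball_mem_nhds _ hr)
    have h2 : ∀ᶠ s in nhdsWithin 0 (Icc (0:ℝ) b), pH s ∈ Metric.ball (γ 0) r := by
      have := (hpHc 0 h0b)
      rw [ContinuousWithinAt, hpH0] at this
      exact this.eventually_mem (Metric.ball_mem_nhds _ hr)
    have h3 : ∀ᶠ s in nhdsWithin 0 (Icc (0:ℝ) b), G s < 0 :=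
      Filter.Tendsto.eventually_lt_const hG0 (hGc 0 h0b)
    exact h1.and (h2.and h3)
  obtain ⟨ε, hε, hεsub⟩ := Metric.mem_nhdsWithin_iff.1 (Filter.eventually_iff.1 hev)
  set δ : ℝ := min b (ε/2) with hδdef
  have hδ0 : 0 < δ := lt_min hb (by positivity)
  have hδb : δ ≤ b := min_le_left _ _
  have hsubδ : Icc (0:ℝ) δ ⊆ Icc 0 b := Icc_subset_Icc le_rfl hδb
  have hgood : ∀ s ∈ Icc (0:ℝ) δ,
      γ s ∈ Metric.ball (γ 0) r ∧ pH s ∈ Metric.ball (γ 0) r ∧ G s < 0 := by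
    intro s hs
    apply hεsub
    refine ⟨?_, hsubδ hs⟩
    rw [Metric.mem_ball, Real.dist_eq, sub_zero, abs_of_nonneg hs.1]
    calc s ≤ δ := hs.2
      _ ≤ ε/2 := min_le_right _ _
      _ < ε := by linarith
  -- constants
  set cc : ℝ := C * V^2 + 2*B*V with hccdef
  have hcc : 0 ≤ cc := add_nonneg (mul_nonneg hC (sq_nonneg V))
    (mul_nonneg (mul_nonneg (by norm_num) hB) hV)
  set C₂ : ℝ := (m:ℝ)^2 * cc with hC₂def
  have hC₂ : 0 ≤ C₂ := mul_nonneg (by positivity) hcc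
  -- the differential inequality
  have hineq : ∀ s ∈ Icc (0:ℝ) δ, γ'' s e ≤ C₂ * (γ s e + |γ' s e|) := by
    intro s hs
    have hsb := hsubδ hs
    obtain ⟨hγball, hpHball, hGs⟩ := hgood s hs
    have hγmem : γ s ∈ Metric.ball (γ 0) r ∩ U := ⟨hγball, hγU s hsb⟩
    have hpHmem : pH s ∈ Metric.ball (γ 0) r ∩ U := ⟨hpHball, hproj s hsb⟩
    have hu0 : 0 ≤ γ s e := hside s hsb
    have hpHe : pH s e = 0 := Function.update_self e 0 (γ s)
    have hvHe : vH s e = 0 := Function.update_self e 0 (γ' s)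
    have hQH : 0 ≤ ∑ i, ∑ j, Γ e i j (pH s) * vH s i * vH s j :=
      hconv (pH s) (hproj s hsb) hpHe (vH s) hvHe hGs
    have hdist : dist (pH s) (γ s) ≤ γ s e := by
      rw [dist_pi_le_iff hu0]
      intro i
      by_cases hie : i = e
      · subst hie
        simp only [hpHdef, Function.update_self, Real.dist_eq, zero_sub, abs_neg]
        rw [abs_of_nonneg hu0]
      · simp [hpHdef, Function.update_of_ne hie, hu0]
    have hvb : ∀ k, |vH s k| ≤ V := by
      intro k
      by_cases hke : k = e
      · subst hke; rw [hvHe]; simpa using hV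
      · simp only [hvHdef, Function.update_of_ne hke]; exact hVb s hsb k
    have hvd : ∀ k, |vH s k - γ' s k| ≤ |γ' s e| := by
      intro k
      by_cases hke : k = e
      · subst hke; rw [hvHe, zero_sub, abs_neg]
      · simp [hvHdef, Function.update_of_ne hke]
    have hγ'b : ∀ k, |γ' s k| ≤ V := fun k => hVb s hsb k
    have hterm : ∀ i j, Γ e i j (pH s) * vH s i * vH s j - Γ e i j (γ s) * γ' s i * γ' s j
        ≤ cc * (γ s e + |γ' s e|) := by
      intro i j
      have hA : |Γ e i j (pH s) - Γ e i j (γ s)| ≤ C * γ s e :=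
        le_trans (hlipE i j _ hpHmem _ hγmem) (mul_le_mul_of_nonneg_left hdist hC)
      have hA' : |Γ e i j (γ s)| ≤ B := hΓbound i j _ hγmem
      have hCu : 0 ≤ C * γ s e := mul_nonneg hC hu0
      have h1 : |Γ e i j (pH s) - Γ e i j (γ s)| * |vH s i| * |vH s j|
          ≤ (C * γ s e) * V * V :=
        mul_le_mul (mul_le_mul hA (hvb i) (abs_nonneg _) hCu) (hvb j) (abs_nonneg _)
          (mul_nonneg hCu hV)
      have h2 : |Γ e i j (γ s)| * |vH s i - γ' s i| * |vH s j| ≤ B * |γ' s e| * V :=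
        mul_le_mul (mul_le_mul hA' (hvd i) (abs_nonneg _) hB) (hvb j) (abs_nonneg _)
          (mul_nonneg hB (abs_nonneg _))
      have h3 : |Γ e i j (γ s)| * |γ' s i| * |vH s j - γ' s j| ≤ B * V * |γ' s e| :=
        mul_le_mul (mul_le_mul hA' (hγ'b i) (abs_nonneg _) hB) (hvd j) (abs_nonneg _)
          (mul_nonneg hB hV)
      calc Γ e i j (pH s) * vH s i * vH s j - Γ e i j (γ s) * γ' s i * γ' s j
          = (Γ e i j (pH s) - Γ e i j (γ s)) * vH s i * vH s j
            + Γ e i j (γ s) * (vH s i - γ' s i) * vH s j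
            + Γ e i j (γ s) * γ' s i * (vH s j - γ' s j) := by ring
        _ ≤ |Γ e i j (pH s) - Γ e i j (γ s)| * |vH s i| * |vH s j|
            + |Γ e i j (γ s)| * |vH s i - γ' s i| * |vH s j|
            + |Γ e i j (γ s)| * |γ' s i| * |vH s j - γ' s j| := by
            have e1 : (Γ e i j (pH s) - Γ e i j (γ s)) * vH s i * vH s j
                ≤ |Γ e i j (pH s) - Γ e i j (γ s)| * |vH s i| * |vH s j| := by
              rw [← abs_mul, ← abs_mul]; exact le_abs_self _
            have e2 : Γ e i j (γ s) * (vH s i - γ' s i) * vH s j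
                ≤ |Γ e i j (γ s)| * |vH s i - γ' s i| * |vH s j| := by
              rw [← abs_mul, ← abs_mul]; exact le_abs_self _
            have e3 : Γ e i j (γ s) * γ' s i * (vH s j - γ' s j)
                ≤ |Γ e i j (γ s)| * |γ' s i| * |vH s j - γ' s j| := by
              rw [← abs_mul, ← abs_mul]; exact le_abs_self _
            linarith
        _ ≤ (C * γ s e) * V * V + B * |γ' s e| * V + B * V * |γ' s e| :=
            add_le_add (add_le_add h1 h2) h3
        _ ≤ cc * (γ s e + |γ' s e|) := by
            rw [hccdef]
            nlinarith [abs_nonneg (γ' s e), hu0,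
              mul_nonneg (mul_nonneg hC (mul_nonneg hV hV)) (abs_nonneg (γ' s e)),
              mul_nonneg (mul_nonneg hB hV) hu0]
    have hsum : (∑ i, ∑ j, Γ e i j (pH s) * vH s i * vH s j)
        - (∑ i, ∑ j, Γ e i j (γ s) * γ' s i * γ' s j)
        ≤ C₂ * (γ s e + |γ' s e|) := by
      rw [← Finset.sum_sub_distrib]
      have h1 : ∀ i ∈ Finset.univ, (∑ j, Γ e i j (pH s) * vH s i * vH s j)
          - (∑ j, Γ e i j (γ s) * γ' s i * γ' s j)
          ≤ ∑ _j : Fin m, cc * (γ s e + |γ' s e|) := by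
        intro i _
        rw [← Finset.sum_sub_distrib]
        exact Finset.sum_le_sum fun j _ => hterm i j
      calc _ ≤ ∑ _i : Fin m, ∑ _j : Fin m, cc * (γ s e + |γ' s e|) :=
            Finset.sum_le_sum h1
        _ = C₂ * (γ s e + |γ' s e|) := by
            simp only [Finset.sum_const, Finset.card_univ, Fintype.card_fin, nsmul_eq_mul,
              hC₂def]
            ring
    have hQγ : γ'' s e = -∑ i, ∑ j, Γ e i j (γ s) * γ' s i * γ' s j := hgeo s hsb e
    linarith [hQH, hsum, hQγ.le, hQγ.ge]
  refine ⟨δ, hδ0, hδb, ?_⟩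
  have hcore := core_gronwall hδ0 hC₂
    (u := fun s => γ s e) (u' := fun s => γ' s e) (u'' := fun s => γ'' s e)
    (fun s hs => (hasDerivWithinAt_pi.1 (hγ' s (hsubδ hs)) e).mono hsubδ)
    (fun s hs => (hasDerivWithinAt_pi.1 (hγ'' s (hsubδ hs)) e).mono hsubδ)
    (((continuous_apply e).comp_continuousOn hγ''cont).mono hsubδ)
    hinit hinit'
    (fun s hs => hside s (hsubδ hs))
    hineq
  exact hcore
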